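/- Let D be a Grothendieck category and Q, S localizing subcategories. The full subcategory S^Q of D/Q consisting of objects of the form X_Q with X ∈ S is closed under direct sums, subobjects, and quotient objects in D/Q. -/

import Mathlib

open CategoryTheory Limits

universe v u u'

variable {D : Type u} [Category.{v} D]

/-- A localizing (Serre) subcategory of an abelian category with coproducts: a class of
objects closed under isomorphisms, subobjects, quotient objects, extensions and
arbitrary direct sums. -/
def IsLocalizingSubcategory [Abelian D] [HasCoproducts.{v} D] (P : Set D) : Prop :=
  (∀ {X Y : D}, (X ≅ Y) → X ∈ P → Y ∈ P) ∧
  (∀ {X Y : D} (f : X ⟶ Y), Mono f → Y ∈ P → X ∈ P) ∧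
  (∀ {X Y : D} (f : X ⟶ Y), Epi f → X ∈ P → Y ∈ P) ∧
  (∀ S : ShortComplex D, S.ShortExact → S.X₁ ∈ P → S.X₃ ∈ P → S.X₂ ∈ P) ∧
  (∀ (ι : Type v) (f : ι → D), (∀ i, f i ∈ P) → (∐ f) ∈ P)

/-- Let `D` be a Grothendieck category, `Q` and `S` localizing subcategories, where the
quotient `D/Q` is modelled by an exact localization functor `L : D ⥤ DQ` with fully
faithful right adjoint (section) `R`, so that `Q = Ker L` and the `Q`-localization of
`X` is `R(L(X))` (equivalently `L(X)` viewed in `D/Q`). Then the full subcategory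
`S^Q = { X_Q | X ∈ S }` of `D/Q` is closed under direct sums, subobjects and quotient
objects in `D/Q`. -/
theorem localization_image_closed_under_sums_sub_quot
    {DQ : Type u'} [Category.{v} DQ] [Abelian D] [Abelian DQ]
    [HasCoproducts.{v} D] [HasCoproducts.{v} DQ]
    (L : D ⥤ DQ) (R : DQ ⥤ D) (adj : L ⊣ R) [R.Full] [R.Faithful]
    [PreservesFiniteLimits L]
    (S : Set D) (hS : IsLocalizingSubcategory S)
    (Q : Set D) (hQ : Q = {X : D | IsZero (L.obj X)}) (hQloc : IsLocalizingSubcategory Q) :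
    (∀ (ι : Type v) (f : ι → DQ),
        (∀ i, f i ∈ {Y : DQ | ∃ X ∈ S, Nonempty (L.obj X ≅ Y)}) →
        (∐ f) ∈ {Y : DQ | ∃ X ∈ S, Nonempty (L.obj X ≅ Y)}) ∧
    (∀ {X Y : DQ} (f : X ⟶ Y), Mono f → Y ∈ {Y : DQ | ∃ X ∈ S, Nonempty (L.obj X ≅ Y)} →
        X ∈ {Y : DQ | ∃ X ∈ S, Nonempty (L.obj X ≅ Y)}) ∧
    (∀ {X Y : DQ} (f : X ⟶ Y), Epi f → X ∈ {Y : DQ | ∃ X ∈ S, Nonempty (L.obj X ≅ Y)} →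
        Y ∈ {Y : DQ | ∃ X ∈ S, Nonempty (L.obj X ≅ Y)}) := by
  haveI : PreservesColimitsOfSize.{v, v} L := adj.leftAdjoint_preservesColimits
  haveI : Functor.PreservesEpimorphisms L := Functor.preservesEpimorphisms_of_adjunction adj
  haveI : Functor.PreservesMonomorphisms R := Functor.preservesMonomorphisms_of_adjunction adj
  refine ⟨?_, ?_, ?_⟩
  · -- coproducts
    intro ι f hf
    choose X hX e using hf
    refine ⟨∐ X, hS.2.2.2.2 ι X hX, ⟨?_⟩⟩
    exact PreservesCoproduct.iso L X ≪≫ Sigma.mapIso (fun i => (e i).some)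
  · -- subobjects
    intro X Y f hf hY
    obtain ⟨X₀, hX₀, ⟨e⟩⟩ := hY
    -- mono g : R X ⟶ R (L X₀)
    have hmono : Mono (f ≫ e.inv) := by
      haveI := hf; exact mono_comp _ _
    haveI := hmono
    set g : R.obj X ⟶ R.obj (L.obj X₀) := R.map (f ≫ e.inv) with hg
    haveI : Mono g := R.map_mono _
    set η := adj.unit.app X₀ with hη
    refine ⟨pullback η g, hS.2.1 (pullback.fst η g) inferInstance hX₀, ⟨?_⟩⟩
    haveI : IsIso (L.map η) := by
      have h1 : L.map η = inv (adj.counit.app (L.obj X₀)) := by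
        apply (cancel_mono (adj.counit.app (L.obj X₀))).1
        simp [hη, adj.left_triangle_components]
      rw [h1]; infer_instance
    haveI : IsIso (pullback.snd (L.map η) (L.map g)) := inferInstance
    exact PreservesPullback.iso L η g ≪≫ asIso (pullback.snd (L.map η) (L.map g)) ≪≫
      asIso (adj.counit.app X)
  · -- quotients
    intro X Y f hf hX
    obtain ⟨X₀, hX₀, ⟨e⟩⟩ := hX
    set h : X₀ ⟶ R.obj Y := adj.unit.app X₀ ≫ R.map (e.hom ≫ f) with hh
    haveI : Epi (e.hom ≫ f) := by haveI := hf; exact epi_comp _ _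
    refine ⟨image h, hS.2.2.1 (factorThruImage h) inferInstance hX₀, ⟨?_⟩⟩
    -- L h ≫ counit = e.hom ≫ f
    have key : L.map h ≫ adj.counit.app Y = e.hom ≫ f := by
      rw [hh, L.map_comp, Category.assoc, adj.counit_naturality (e.hom ≫ f),
        ← Category.assoc, adj.left_triangle_components X₀, Category.id_comp (e.hom ≫ f)]
    have comm : (e.hom ≫ f) ≫ inv (adj.counit.app Y) = L.map h := by
      rw [← key]; simp
    haveI : StrongEpi (e.hom ≫ f) := strongEpi_of_epi _
    haveI : Mono (inv (adj.counit.app Y)) := inferInstance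
    have comm2 : L.map (factorThruImage h) ≫ L.map (image.ι h) = L.map h := by
      rw [← L.map_comp, image.fac]
    haveI : StrongEpi (L.map (factorThruImage h)) := strongEpi_of_epi _
    haveI : Mono (L.map (image.ι h)) := L.map_mono _
    exact (image.isoStrongEpiMono (L.map (factorThruImage h)) (L.map (image.ι h)) comm2)
      ≪≫ (image.isoStrongEpiMono (e.hom ≫ f) (inv (adj.counit.app Y)) comm).symm
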